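/- Let k ≥ 1, let p < q be odd primes, n = 2^k·p·q, M = 2^{k+1} - 1. If σ(n) - 2n = M + 1 = 2^{k+1} and M < p, then n is weird. -/

import Mathlib

/-- Sum of the positive divisors of `n`. -/
def sigma' (n : ℕ) : ℕ := ∑ d ∈ n.divisors, d

/-- `n` is abundant if `σ(n) > 2n`. -/
def Abundant (n : ℕ) : Prop := 2 * n < sigma' n

/-- `n` is pseudoperfect (in the weak sense) if some subset of its proper divisors sums to `n`. -/
def Pseudoperfect (n : ℕ) : Prop := ∃ s ⊆ n.properDivisors, ∑ d ∈ s, d = n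

/-- `n` is weird if it is abundant and no subset of its proper divisors sums to `n`. -/
def Weird (n : ℕ) : Prop := Abundant n ∧ ¬ Pseudoperfect n

lemma geom_two_sum (k : ℕ) : ∑ i ∈ Finset.range (k + 1), 2 ^ i = 2 ^ (k + 1) - 1 := by
  induction k with
  | zero => simp
  | succ m ih =>
      rw [Finset.sum_range_succ, ih]
      have : 0 < (2:ℕ) ^ (m + 1) := Nat.pow_pos (by norm_num)
      ring_nf
      omega

theorem weird_of_abundance_eq (k p q : ℕ) (hk : 1 ≤ k) (hp : p.Prime) (hq : q.Prime)
    (hop : Odd p) (hoq : Odd q) (hpq : p < q)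
    (ha : (sigma' (2 ^ k * p * q) : ℤ) - 2 * (2 ^ k * p * q) = 2 ^ (k + 1))
    (hMp : 2 ^ (k + 1) - 1 < p) : Weird (2 ^ k * p * q) := by
  set n := 2 ^ k * p * q with hn
  have h2k : 0 < (2:ℕ) ^ k := Nat.pow_pos (by norm_num)
  have hn0 : 0 < n := Nat.mul_pos (Nat.mul_pos h2k hp.pos) hq.pos
  have h2k1 : 0 < (2:ℕ) ^ (k+1) := Nat.pow_pos (by norm_num)
  have hσ : sigma' n = 2 * n + 2 ^ (k + 1) := by
    have h : (sigma' n : ℤ) = 2 * n + 2 ^ (k + 1) := by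
      rw [hn]; push_cast; linarith
    exact_mod_cast h
  constructor
  · unfold Abundant; omega
  rintro ⟨s, hs, hsum⟩
  -- sum of proper divisors
  have hprop : ∑ d ∈ n.properDivisors, d = n + 2 ^ (k + 1) := by
    have h1 : ∑ d ∈ n.divisors, d = n + ∑ d ∈ n.properDivisors, d := by
      rw [← Nat.insert_self_properDivisors hn0.ne',
        Finset.sum_insert Nat.self_notMem_properDivisors]
    have h2 : sigma' n = ∑ d ∈ n.divisors, d := rfl
    omega
  set t := n.properDivisors \ s with ht
  have hts : ∑ d ∈ t, d + ∑ d ∈ s, d = ∑ d ∈ n.properDivisors, d :=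
    Finset.sum_sdiff hs
  have htsum : ∑ d ∈ t, d = 2 ^ (k + 1) := by omega
  -- p ≥ 2^(k+1)+1
  have hpbig : 2 ^ (k + 1) < p := by
    rcases hop with ⟨m, hm⟩
    have : p ≠ 2 ^ (k + 1) := by
      intro h
      have : (2:ℕ) ∣ 2 ^ (k + 1) := dvd_pow_self 2 (Nat.succ_ne_zero k)
      omega
    omega
  have hqbig : 2 ^ (k + 1) < q := lt_trans hpbig hpq
  -- every element of t divides 2^k
  have hsub : t ⊆ (2 ^ k).divisors := by
    intro d hd
    have hdn : d ∈ n.divisors := Nat.mem_divisors.mpr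
      ⟨(Nat.mem_properDivisors.mp (Finset.mem_sdiff.mp hd).1).1, hn0.ne'⟩
    have hdvd : d ∣ n := (Nat.mem_divisors.mp hdn).1
    have hdle : d ≤ 2 ^ (k + 1) := htsum ▸ Finset.single_le_sum (fun i _ => Nat.zero_le i) hd
    have hpd : ¬ p ∣ d := fun h => absurd (le_trans (Nat.le_of_dvd
      (Nat.pos_of_mem_divisors hdn) h) hdle) (not_le.mpr hpbig)
    have hqd : ¬ q ∣ d := fun h => absurd (le_trans (Nat.le_of_dvd
      (Nat.pos_of_mem_divisors hdn) h) hdle) (not_le.mpr hqbig)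
    have hcq : Nat.Coprime d q := (hq.coprime_iff_not_dvd.mpr hqd).symm
    have hcp : Nat.Coprime d p := (hp.coprime_iff_not_dvd.mpr hpd).symm
    have hd1 : d ∣ 2 ^ k * p := hcq.dvd_of_dvd_mul_right hdvd
    have hd2 : d ∣ 2 ^ k := hcp.dvd_of_dvd_mul_right hd1
    exact Nat.mem_divisors.mpr ⟨hd2, h2k.ne'⟩
  have hle : ∑ d ∈ t, d ≤ ∑ d ∈ (2 ^ k).divisors, d :=
    Finset.sum_le_sum_of_subset hsub
  have hσ2 : ∑ d ∈ (2 ^ k).divisors, d = 2 ^ (k + 1) - 1 := by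
    rw [Nat.sum_divisors_prime_pow Nat.prime_two, geom_two_sum]
  omega
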